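/- Let K be the 3×3 matrix with k_12=k_21=k_22=k_23=k_32=1, k_11=k_33=(1-r²)^{-2}, and k_13=k_31=(1+r²)^{-2}, for 0<r<1. Then K is positive definite, and for all sufficiently small r>0, the quantities δ_ij = sqrt(1 - |k_ij|²/(k_ii k_jj)) violate the strengthened triangle inequality: δ_13 > (δ_12+δ_23)/(1+δ_12 δ_23). -/

import Mathlib

/-- The Gram matrix of the Bergman kernels `k_z(w) = (1-z̄w)⁻²` at the points `{-r,0,r}`. -/
noncomputable def bergGram (r : ℝ) : Matrix (Fin 3) (Fin 3) ℝ :=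
  !![((1 - r ^ 2) ^ 2)⁻¹, 1, ((1 + r ^ 2) ^ 2)⁻¹;
     1, 1, 1;
     ((1 + r ^ 2) ^ 2)⁻¹, 1, ((1 - r ^ 2) ^ 2)⁻¹]

/-- The induced metric `δ_ij = √(1 - k_ij²/(k_ii k_jj))` of the Gram matrix `bergGram r`. -/
noncomputable def bergDelta (r : ℝ) (i j : Fin 3) : ℝ :=
  Real.sqrt (1 - (bergGram r i j) ^ 2 / (bergGram r i i * bergGram r j j))

lemma bergGram_posDef (r : ℝ) (h0 : 0 < r) (h1 : r < 1) : (bergGram r).PosDef := by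
  have h1r : (0:ℝ) < 1 - r ^ 2 := by nlinarith
  have hu : (0:ℝ) < (1 - r ^ 2) ^ 2 := by positivity
  have hv : (0:ℝ) < (1 + r ^ 2) ^ 2 := by positivity
  have hr4 : r ^ 4 < 1 := by nlinarith [pow_pos h0 4]
  set a := ((1 - r ^ 2) ^ 2)⁻¹ with ha
  set b := ((1 + r ^ 2) ^ 2)⁻¹ with hb
  have ha1 : 1 < a := by
    rw [ha, lt_inv_comm₀ one_pos hu, inv_one]
    nlinarith [pow_pos h0 2]
  have hb1 : b ≤ 1 := by
    rw [hb, inv_le_one_iff₀]; right; nlinarith [pow_pos h0 2]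
  have hab : 2 < a + b := by
    have h : a + b - 2 = (2 * r ^ 4 * (3 - r ^ 4)) / ((1 - r ^ 2) ^ 2 * (1 + r ^ 2) ^ 2) := by
      rw [ha, hb]; field_simp; ring
    have hnum : (0:ℝ) < 2 * r ^ 4 * (3 - r ^ 4) := by
      have := pow_pos h0 4; nlinarith
    nlinarith [div_pos hnum (mul_pos hu hv)]
  refine Matrix.PosDef.of_dotProduct_mulVec_pos ?_ ?_
  · ext i j
    fin_cases i <;> fin_cases j <;>
      simp [bergGram, Matrix.conjTranspose_apply, Matrix.vecHead, Matrix.vecTail]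
  · intro x hx
    have hQ : dotProduct (star x) ((bergGram r).mulVec x) =
        a * x 0 ^ 2 + x 1 ^ 2 + a * x 2 ^ 2 + 2 * x 0 * x 1 + 2 * b * x 0 * x 2
          + 2 * x 1 * x 2 := by
      simp [bergGram, Matrix.mulVec, dotProduct, Fin.sum_univ_three, Matrix.vecHead,
        Matrix.vecTail]
      ring
    rw [hQ]
    have h : x 0 ≠ 0 ∨ x 1 ≠ 0 ∨ x 2 ≠ 0 := by
      by_contra hc
      push_neg at hc
      exact hx (by ext i; fin_cases i <;> simp [hc.1, hc.2.1, hc.2.2])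
    by_cases h0' : x 0 = 0
    · by_cases h2' : x 2 = 0
      · have h1' : x 1 ≠ 0 := by tauto
        have : 0 < x 1 ^ 2 := by positivity
        rw [h0', h2']; nlinarith
      · have : 0 < x 2 ^ 2 := by positivity
        nlinarith [sq_nonneg (x 0 + x 1 + x 2), sq_nonneg (x 0 - x 2), sq_nonneg (x 0 + x 2)]
    · have : 0 < x 0 ^ 2 := by positivity
      nlinarith [sq_nonneg (x 0 + x 1 + x 2), sq_nonneg (x 0 - x 2), sq_nonneg (x 0 + x 2)]

lemma bergDelta_sti_fail (r : ℝ) (h0 : 0 < r) (h1 : r < 1/2) :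
    (bergDelta r 0 1 + bergDelta r 1 2) / (1 + bergDelta r 0 1 * bergDelta r 1 2) <
      bergDelta r 0 2 := by
  have h1r : (0:ℝ) < 1 - r ^ 2 := by nlinarith
  have hv : (0:ℝ) < 1 + r ^ 2 := by positivity
  have e01 : bergDelta r 0 1 = Real.sqrt (1 - (1 - r ^ 2) ^ 2) := by
    unfold bergDelta bergGram
    norm_num [Matrix.vecHead, Matrix.vecTail]
  have e12 : bergDelta r 1 2 = Real.sqrt (1 - (1 - r ^ 2) ^ 2) := by
    unfold bergDelta bergGram
    norm_num [Matrix.vecHead, Matrix.vecTail, Matrix.cons_val_two]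
  have e02 : bergDelta r 0 2 = Real.sqrt (1 - (1 - r ^ 2) ^ 4 / (1 + r ^ 2) ^ 4) := by
    unfold bergDelta bergGram
    norm_num [Matrix.vecHead, Matrix.vecTail, Matrix.cons_val_two]
    congr 1
    have h1 : ((1 - r ^ 2) ^ 2) ≠ 0 := by positivity
    have h2 : ((1 + r ^ 2) ^ 2) ≠ 0 := by positivity
    field_simp
  rw [e01, e12, e02]
  set s : ℝ := 1 - (1 - r ^ 2) ^ 2 with hs
  have hs0 : 0 ≤ s := by nlinarith [pow_pos h0 2]
  have hds : Real.sqrt s ^ 2 = s := Real.sq_sqrt hs0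
  have hT : 0 ≤ 1 - (1 - r ^ 2) ^ 4 / (1 + r ^ 2) ^ 4 := by
    rw [sub_nonneg, div_le_one (by positivity)]
    nlinarith [pow_pos h0 2, pow_pos hv 2]
  have hss : Real.sqrt s * Real.sqrt s = s := Real.mul_self_sqrt hs0
  rw [hss]
  have hs1 : (0:ℝ) < 1 + s := by linarith
  refine (Real.lt_sqrt (by positivity)).mpr ?_
  have hsq : ((Real.sqrt s + Real.sqrt s) / (1 + s)) ^ 2 = 4 * s / (1 + s) ^ 2 := by
    rw [div_pow]
    congr 1
    nlinarith [hds]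
  rw [hsq]
  have heq : 1 - (1 - r ^ 2) ^ 4 / (1 + r ^ 2) ^ 4 - 4 * s / (1 + s) ^ 2 =
      4 * r ^ 4 * (1 - 2 * r ^ 2 - 2 * r ^ 4 + 8 * r ^ 6 - 7 * r ^ 8 + 2 * r ^ 10) /
        ((1 + r ^ 2) ^ 4 * (1 + s) ^ 2) := by
    rw [hs]
    have hne : (1 + (1 - (1 - r ^ 2) ^ 2)) ≠ 0 := by nlinarith
    field_simp
    ring
  have hr2 : r ^ 2 < 1 / 4 := by nlinarith
  have hnum : (0:ℝ) < 4 * r ^ 4 * (1 - 2 * r ^ 2 - 2 * r ^ 4 + 8 * r ^ 6 - 7 * r ^ 8 + 2 * r ^ 10) := by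
    have h4 : (0:ℝ) < r ^ 4 := by positivity
    have h6 : (0:ℝ) < r ^ 6 := by positivity
    nlinarith [pow_pos h0 2, pow_pos h0 8, pow_pos h0 10, sq_nonneg (r^4), sq_nonneg (r^5)]
  nlinarith [div_pos hnum (by positivity : (0:ℝ) < (1 + r ^ 2) ^ 4 * (1 + s) ^ 2)]

/-- The Bergman Gram matrix at `{-r,0,r}` is positive definite, yet for all small `r > 0`
the induced distances violate the strengthened triangle inequality:
`δ₁₃ > (δ₁₂+δ₂₃)/(1+δ₁₂δ₂₃)`. -/
theorem bergman_fails_sti :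
    (∀ r : ℝ, 0 < r → r < 1 → (bergGram r).PosDef) ∧
      ∃ r₀ : ℝ, 0 < r₀ ∧ ∀ r : ℝ, 0 < r → r < r₀ →
        (bergDelta r 0 1 + bergDelta r 1 2) / (1 + bergDelta r 0 1 * bergDelta r 1 2) <
          bergDelta r 0 2 := by
  exact ⟨bergGram_posDef, 1/2, by norm_num, fun r h0 h1 => bergDelta_sti_fail r h0 h1⟩
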